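/- Let T : X → X be a (b,a)-enriched Kannan contraction with b > 0 and λ = 1/(b+1). Then T_λ = (1−λ)I + λT is a Kannan contraction: ‖T_λ x − T_λ y‖ ≤ a(‖x − T_λ x‖ + ‖y − T_λ y‖) for all x, y ∈ X. -/

import Mathlib

theorem enriched_kannan_averaged_is_kannan
    {E : Type*} [NormedAddCommGroup E] [NormedSpace ℝ E]
    (T : E → E) (a b : ℝ) (hb : 0 < b) (ha0 : 0 ≤ a) (ha1 : a < 1 / 2)
    (hT : ∀ x y : E, ‖b • (x - y) + (T x - T y)‖ ≤
      a * (‖x - T x‖ + ‖y - T y‖)) :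
    ∀ x y : E,
      ‖((1 - (1 / (b + 1))) • x + (1 / (b + 1)) • T x) -
        ((1 - (1 / (b + 1))) • y + (1 / (b + 1)) • T y)‖ ≤
      a * (‖x - ((1 - (1 / (b + 1))) • x + (1 / (b + 1)) • T x)‖ +
        ‖y - ((1 - (1 / (b + 1))) • y + (1 / (b + 1)) • T y)‖) := by
  intro x y
  set l : ℝ := 1 / (b + 1) with hl
  have hb1 : b + 1 ≠ 0 := by positivity
  have hlpos : 0 < l := by positivity
  have h1 : ((1 - l) • x + l • T x) - ((1 - l) • y + l • T y)
      = l • (b • (x - y) + (T x - T y)) := by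
    have : (1 : ℝ) - l = l * b := by rw [hl]; field_simp; ring
    rw [this]; module
  have h2 : x - ((1 - l) • x + l • T x) = l • (x - T x) := by module
  have h3 : y - ((1 - l) • y + l • T y) = l • (y - T y) := by module
  rw [h1, h2, h3, norm_smul, norm_smul, norm_smul,
    Real.norm_of_nonneg hlpos.le]
  have := hT x y
  nlinarith [norm_nonneg (b • (x - y) + (T x - T y))]
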